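/- Let V be an n-dimensional real inner product space and S a complex Hermitian Clifford module over V with skew-adjoint Clifford multiplication. If α is a real 2-form on V satisfying α ∧ α = 0, then c(α)² = -|α|² · id on S, where c(α) = Σ_{i<j} α(e_i,e_j)c(e_i)c(e_j) and |α| is the norm induced by the inner product on Λ²(V*). Consequently |c(α)φ| = |α|·|φ| for every φ ∈ S. -/

import Mathlib

open Finset

section SumHelpers

variable {ι M : Type*} [Fintype ι] [AddCommMonoid M]

lemma stmt8_sum3_swap13 (f : ι → ι → ι → M) :
    ∑ i, ∑ j, ∑ q, f i j q = ∑ i, ∑ j, ∑ q, f q j i :=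
  calc ∑ i, ∑ j, ∑ q, f i j q
      = ∑ j, ∑ i, ∑ q, f i j q := Finset.sum_comm
    _ = ∑ j, ∑ q, ∑ i, f i j q := Finset.sum_congr rfl fun _ _ => Finset.sum_comm
    _ = ∑ q, ∑ j, ∑ i, f i j q := Finset.sum_comm

lemma stmt8_sum3_cycle (f : ι → ι → ι → M) :
    ∑ i, ∑ j, ∑ q, f i j q = ∑ i, ∑ j, ∑ q, f j q i :=
  calc ∑ i, ∑ j, ∑ q, f i j q
      = ∑ i, ∑ q, ∑ j, f i j q := Finset.sum_congr rfl fun _ _ => Finset.sum_comm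
    _ = ∑ q, ∑ i, ∑ j, f i j q := Finset.sum_comm

end SumHelpers

section Abstract

variable {n : ℕ} {R : Type*} [Ring R] [Algebra ℂ R]

lemma stmt8_hswap (C : Fin n → R)
    (hrel : ∀ i j, C i * C j + C j * C i = ((-2 : ℂ) * (if i = j then 1 else 0)) • (1:R))
    (i j : Fin n) :
    C j * C i = ((-2 : ℂ) * (if i = j then 1 else 0)) • (1:R) - C i * C j :=
  eq_sub_of_add_eq' (hrel i j)

lemma stmt8_moveA (C : Fin n → R)
    (hrel : ∀ i j, C i * C j + C j * C i = ((-2 : ℂ) * (if i = j then 1 else 0)) • (1:R))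
    (i j p q : Fin n) :
    (C i * C p) * (C j * C q)
      = -((C i * C j) * (C p * C q))
        + ((-2:ℂ) * (if j = p then 1 else 0)) • (C i * C q) := by
  have h : C p * C j = ((-2 : ℂ) * (if j = p then 1 else 0)) • (1:R) - C j * C p :=
    stmt8_hswap C hrel j p
  calc (C i * C p) * (C j * C q) = C i * ((C p * C j) * C q) := by noncomm_ring
    _ = _ := by
        rw [h]
        simp only [sub_mul, smul_mul_assoc, one_mul, mul_sub, mul_smul_comm]
        noncomm_ring

lemma stmt8_moveB (C : Fin n → R)
    (hrel : ∀ i j, C i * C j + C j * C i = ((-2 : ℂ) * (if i = j then 1 else 0)) • (1:R))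
    (i j p q : Fin n) :
    (C i * C p) * (C q * C j)
      = (C i * C j) * (C p * C q)
        + ((2:ℂ) * (if j = p then 1 else 0)) • (C i * C q)
        - ((2:ℂ) * (if j = q then 1 else 0)) • (C i * C p) := by
  have h : C q * C j = ((-2 : ℂ) * (if j = q then 1 else 0)) • (1:R) - C j * C q :=
    stmt8_hswap C hrel j q
  calc (C i * C p) * (C q * C j)
      = ((-2:ℂ) * (if j = q then 1 else 0)) • (C i * C p) - (C i * C p) * (C j * C q) := by
        rw [h]; simp only [mul_sub, mul_smul_comm, mul_one]
    _ = _ := by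
        rw [stmt8_moveA C hrel i j p q]
        have h1 : ((-2:ℂ) * (if j = p then 1 else 0)) • (C i * C q)
            = -(((2:ℂ) * (if j = p then 1 else 0)) • (C i * C q)) := by
          rw [← neg_smul, neg_mul]
        have h2 : ((-2:ℂ) * (if j = q then 1 else 0)) • (C i * C p)
            = -(((2:ℂ) * (if j = q then 1 else 0)) • (C i * C p)) := by
          rw [← neg_smul, neg_mul]
        rw [h1, h2]; noncomm_ring

lemma stmt8_Gval (C : Fin n → R) (α : Fin n → Fin n → ℝ)
    (hrel : ∀ i j, C i * C j + C j * C i = ((-2 : ℂ) * (if i = j then 1 else 0)) • (1:R))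
    (hα : ∀ i j, α i j = -α j i) :
    (∑ i, ∑ j, ∑ q, ((α i j * α j q : ℝ) : ℂ) • (C i * C q))
      = (((∑ i, ∑ j, (α i j)^2 : ℝ)) : ℂ) • (1:R) := by
  have h1 : (∑ i, ∑ j, ∑ q, ((α i j * α j q : ℝ) : ℂ) • (C i * C q))
      = ∑ i, ∑ j, ∑ q, ((α i j * α j q : ℝ) : ℂ) • (C q * C i) := by
    rw [stmt8_sum3_swap13 (f := fun i j q => ((α i j * α j q : ℝ) : ℂ) • (C i * C q))]
    refine Finset.sum_congr rfl fun i _ => Finset.sum_congr rfl fun j _ =>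
      Finset.sum_congr rfl fun q _ => ?_
    congr 1
    rw [hα q j, hα j i]; push_cast; ring
  have key : (2:ℂ) • (∑ i, ∑ j, ∑ q, ((α i j * α j q : ℝ) : ℂ) • (C i * C q))
      = ((2 * ∑ i, ∑ j, (α i j)^2 : ℝ) : ℂ) • (1:R) := by
    rw [two_smul]
    nth_rewrite 2 [h1]
    simp only [← Finset.sum_add_distrib, ← smul_add]
    have step : ∀ i j : Fin n, (∑ q, ((α i j * α j q : ℝ) : ℂ) • (C i * C q + C q * C i))
        = (((α i j * α j i : ℝ) : ℂ) * (-2)) • (1:R) := by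
      intro i j
      simp only [hrel, mul_ite, mul_one, mul_zero, ite_smul, zero_smul, smul_ite,
        smul_zero, smul_smul, Finset.sum_ite_eq, Finset.mem_univ, if_true]
    simp only [step]
    simp only [← Finset.sum_smul]
    congr 1
    push_cast
    rw [Finset.sum_congr rfl fun i _ => Finset.sum_congr rfl fun j _ =>
      (by rw [hα j i]; push_cast; ring :
        ((α i j : ℂ) * (α j i : ℂ)) * (-2) = 2 * (α i j : ℂ)^2)]
    rw [Finset.mul_sum]
    exact Finset.sum_congr rfl fun i _ => by rw [Finset.mul_sum]
  have := congrArg (fun x => ((2:ℂ)⁻¹) • x) key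
  simp only [smul_smul] at this
  rw [inv_mul_cancel₀ (two_ne_zero), one_smul] at this
  rw [this]
  congr 1
  push_cast
  ring

lemma stmt8_deltaG1 (C : Fin n → R) (α : Fin n → Fin n → ℝ) (t : ℂ) :
    (∑ i, ∑ j, ∑ p, ∑ q, ((α i j * α p q : ℝ) : ℂ) •
        ((t * (if j = p then 1 else 0)) • (C i * C q)))
      = t • ∑ i, ∑ j, ∑ q, ((α i j * α j q : ℝ) : ℂ) • (C i * C q) := by
  rw [Finset.smul_sum]
  refine Finset.sum_congr rfl fun i _ => ?_
  rw [Finset.smul_sum]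
  refine Finset.sum_congr rfl fun j _ => ?_
  rw [Finset.smul_sum, Finset.sum_comm]
  refine Finset.sum_congr rfl fun q _ => ?_
  simp only [smul_smul, mul_ite, mul_one, mul_zero, ite_smul, zero_smul, smul_ite,
    smul_zero, Finset.sum_ite_eq, Finset.mem_univ, if_true]
  congr 1
  ring

lemma stmt8_deltaG2 (C : Fin n → R) (α : Fin n → Fin n → ℝ)
    (hα : ∀ i j, α i j = -α j i) (t : ℂ) :
    (∑ i, ∑ j, ∑ p, ∑ q, ((α i j * α p q : ℝ) : ℂ) •
        ((t * (if j = q then 1 else 0)) • (C i * C p)))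
      = (-t) • ∑ i, ∑ j, ∑ q, ((α i j * α j q : ℝ) : ℂ) • (C i * C q) := by
  rw [Finset.smul_sum]
  refine Finset.sum_congr rfl fun i _ => ?_
  rw [Finset.smul_sum]
  refine Finset.sum_congr rfl fun j _ => ?_
  rw [Finset.smul_sum]
  refine Finset.sum_congr rfl fun p _ => ?_
  simp only [smul_smul, mul_ite, mul_one, mul_zero, ite_smul, zero_smul, smul_ite,
    smul_zero, Finset.sum_ite_eq, Finset.mem_univ, if_true]
  congr 1
  rw [hα p j]
  push_cast
  ring

lemma stmt8_Tval (C : Fin n → R) (α : Fin n → Fin n → ℝ)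
    (hrel : ∀ i j, C i * C j + C j * C i = ((-2 : ℂ) * (if i = j then 1 else 0)) • (1:R))
    (hα : ∀ i j, α i j = -α j i)
    (hwedge : ∀ a b p q : Fin n, α a b * α p q - α a p * α b q + α a q * α b p = 0) :
    (∑ i, ∑ j, ∑ p, ∑ q, ((α i j * α p q : ℝ) : ℂ) • ((C i * C j) * (C p * C q)))
      = ((-2 * ∑ i, ∑ j, (α i j)^2 : ℝ) : ℂ) • (1:R) := by
  set T := ∑ i, ∑ j, ∑ p, ∑ q, ((α i j * α p q : ℝ) : ℂ) • ((C i * C j) * (C p * C q)) with hTdef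
  set G := ∑ i, ∑ j, ∑ q, ((α i j * α j q : ℝ) : ℂ) • (C i * C q) with hGdef
  have hS1 : (∑ i, ∑ j, ∑ p, ∑ q, ((α i p * α j q : ℝ) : ℂ) • ((C i * C j) * (C p * C q)))
      = -T + (-2:ℂ) • G := by
    have relabel : (∑ i, ∑ j, ∑ p, ∑ q, ((α i p * α j q : ℝ) : ℂ) • ((C i * C j) * (C p * C q)))
        = ∑ i, ∑ j, ∑ p, ∑ q, ((α i j * α p q : ℝ) : ℂ) • ((C i * C p) * (C j * C q)) :=
      Finset.sum_congr rfl fun i _ => Finset.sum_comm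
    rw [relabel]
    calc ∑ i, ∑ j, ∑ p, ∑ q, ((α i j * α p q : ℝ) : ℂ) • ((C i * C p) * (C j * C q))
        = ∑ i, ∑ j, ∑ p, ∑ q, (-(((α i j * α p q : ℝ) : ℂ) • ((C i * C j) * (C p * C q)))
            + ((α i j * α p q : ℝ) : ℂ) • (((-2:ℂ) * (if j = p then 1 else 0)) • (C i * C q))) := by
          refine Finset.sum_congr rfl fun i _ => Finset.sum_congr rfl fun j _ =>
            Finset.sum_congr rfl fun p _ => Finset.sum_congr rfl fun q _ => ?_
          rw [stmt8_moveA C hrel i j p q, smul_add, smul_neg]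
      _ = -T + (-2:ℂ) • G := by
          simp only [Finset.sum_add_distrib, Finset.sum_neg_distrib]
          rw [stmt8_deltaG1 C α (-2), ← hTdef, ← hGdef]
  have hS2 : (∑ i, ∑ j, ∑ p, ∑ q, ((α i q * α j p : ℝ) : ℂ) • ((C i * C j) * (C p * C q)))
      = T + (4:ℂ) • G := by
    have relabel : (∑ i, ∑ j, ∑ p, ∑ q, ((α i q * α j p : ℝ) : ℂ) • ((C i * C j) * (C p * C q)))
        = ∑ i, ∑ j, ∑ p, ∑ q, ((α i j * α p q : ℝ) : ℂ) • ((C i * C p) * (C q * C j)) :=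
      Finset.sum_congr rfl fun i _ =>
        stmt8_sum3_cycle (f := fun j p q => ((α i q * α j p : ℝ) : ℂ) • ((C i * C j) * (C p * C q)))
    rw [relabel]
    calc ∑ i, ∑ j, ∑ p, ∑ q, ((α i j * α p q : ℝ) : ℂ) • ((C i * C p) * (C q * C j))
        = ∑ i, ∑ j, ∑ p, ∑ q, (((α i j * α p q : ℝ) : ℂ) • ((C i * C j) * (C p * C q))
            + ((α i j * α p q : ℝ) : ℂ) • (((2:ℂ) * (if j = p then 1 else 0)) • (C i * C q))
            - ((α i j * α p q : ℝ) : ℂ) • (((2:ℂ) * (if j = q then 1 else 0)) • (C i * C p))) := by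
          refine Finset.sum_congr rfl fun i _ => Finset.sum_congr rfl fun j _ =>
            Finset.sum_congr rfl fun p _ => Finset.sum_congr rfl fun q _ => ?_
          rw [stmt8_moveB C hrel i j p q, smul_sub, smul_add]
      _ = T + (4:ℂ) • G := by
          simp only [sub_eq_add_neg, Finset.sum_add_distrib, Finset.sum_neg_distrib]
          rw [stmt8_deltaG1 C α 2, stmt8_deltaG2 C α hα 2, ← hTdef, ← hGdef]
          have h1 : -((-2:ℂ) • G) = (2:ℂ) • G := by rw [neg_smul, neg_neg]
          rw [h1, add_assoc, ← add_smul]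
          norm_num
  have hsplit : T = (∑ i, ∑ j, ∑ p, ∑ q, ((α i p * α j q : ℝ) : ℂ) • ((C i * C j) * (C p * C q)))
      - (∑ i, ∑ j, ∑ p, ∑ q, ((α i q * α j p : ℝ) : ℂ) • ((C i * C j) * (C p * C q))) := by
    rw [hTdef, ← Finset.sum_sub_distrib]
    refine Finset.sum_congr rfl fun i _ => ?_
    rw [← Finset.sum_sub_distrib]
    refine Finset.sum_congr rfl fun j _ => ?_
    rw [← Finset.sum_sub_distrib]
    refine Finset.sum_congr rfl fun p _ => ?_
    rw [← Finset.sum_sub_distrib]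
    refine Finset.sum_congr rfl fun q _ => ?_
    rw [← sub_smul]
    congr 1
    have := hwedge i j p q
    have h' : α i j * α p q = α i p * α j q - α i q * α j p := by linarith
    rw [h']
    push_cast
    ring
  rw [hS1, hS2] at hsplit
  have h3 : (3:ℂ) • T = (3:ℂ) • (((-2:ℂ)) • G) := by
    have e1 : (3:ℂ) • T = T + T + T := by
      rw [show (3:ℂ) = 1 + 1 + 1 by norm_num, add_smul, add_smul, one_smul]
    rw [e1]
    nth_rewrite 1 [hsplit]
    rw [smul_smul]
    have e2 : ((3:ℂ) * -2) • G = (-2:ℂ) • G + (-4:ℂ) • G := by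
      rw [← add_smul]; norm_num
    rw [e2]
    have e4 : (-4:ℂ) • G = -((4:ℂ) • G) := by rw [neg_smul]
    rw [e4]
    abel
  have hT2 : T = (-2:ℂ) • G := by
    have := congrArg (fun x => ((3:ℂ)⁻¹) • x) h3
    simpa [smul_smul] using this
  rw [hT2, hGdef, stmt8_Gval C α hrel hα, smul_smul]
  congr 1
  push_cast
  ring

lemma stmt8_pair_split {M : Type*} [AddCommMonoid M] (f : Fin n → Fin n → M)
    (hdiag : ∀ i, f i i = 0) (hsymm : ∀ i j : Fin n, j < i → f i j = f j i) :
    (∑ i, ∑ j, f i j)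
      = (∑ p ∈ Finset.univ.filter (fun p : Fin n × Fin n => p.1 < p.2), f p.1 p.2)
        + ∑ p ∈ Finset.univ.filter (fun p : Fin n × Fin n => p.1 < p.2), f p.1 p.2 := by
  rw [← Finset.sum_product', Finset.univ_product_univ]
  rw [← Finset.sum_filter_add_sum_filter_not Finset.univ
    (fun p : Fin n × Fin n => p.1 < p.2) (fun p => f p.1 p.2)]
  congr 1
  have h0 : ∑ p ∈ Finset.univ.filter (fun p : Fin n × Fin n => ¬ p.1 < p.2), f p.1 p.2
      = ∑ p ∈ Finset.univ.filter (fun p : Fin n × Fin n => p.2 < p.1), f p.1 p.2 := by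
    rw [← Finset.sum_filter_add_sum_filter_not
      (Finset.univ.filter (fun p : Fin n × Fin n => ¬ p.1 < p.2))
      (fun p : Fin n × Fin n => p.2 < p.1) (fun p => f p.1 p.2)]
    have hz : ∑ p ∈ (Finset.univ.filter (fun p : Fin n × Fin n => ¬ p.1 < p.2)).filter
        (fun p : Fin n × Fin n => ¬ p.2 < p.1), f p.1 p.2 = 0 := by
      refine Finset.sum_eq_zero fun p hp => ?_
      simp only [Finset.mem_filter] at hp
      have he : p.1 = p.2 := le_antisymm (not_lt.1 hp.2) (not_lt.1 hp.1.2)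
      calc f p.1 p.2 = f p.2 p.2 := by rw [he]
        _ = 0 := hdiag p.2
    rw [hz, add_zero]
    congr 1
    rw [Finset.filter_filter]
    refine Finset.filter_congr fun p _ => ?_
    exact ⟨fun h => h.2, fun h => ⟨not_lt.2 h.le, h⟩⟩
  rw [h0]
  refine Finset.sum_nbij' (fun p : Fin n × Fin n => (p.2, p.1))
    (fun p : Fin n × Fin n => (p.2, p.1)) ?_ ?_ ?_ ?_ ?_
  · intro a ha; simp only [Finset.mem_filter, Finset.mem_univ, true_and] at ha ⊢; exact ha
  · intro a ha; simp only [Finset.mem_filter, Finset.mem_univ, true_and] at ha ⊢; exact ha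
  · intro a _; rfl
  · intro a _; rfl
  · intro a ha
    simp only [Finset.mem_filter, Finset.mem_univ, true_and] at ha
    exact hsymm a.1 a.2 ha

lemma stmt8_expand_prod (a : Fin n → Fin n → ℝ) (X : Fin n → Fin n → R) :
    (∑ i, ∑ j, ((a i j : ℝ) : ℂ) • X i j) * (∑ p, ∑ q, ((a p q : ℝ) : ℂ) • X p q)
      = ∑ i, ∑ j, ∑ p, ∑ q, ((a i j * a p q : ℝ) : ℂ) • (X i j * X p q) := by
  rw [Finset.sum_mul]
  refine Finset.sum_congr rfl fun i _ => ?_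
  rw [Finset.sum_mul]
  refine Finset.sum_congr rfl fun j _ => ?_
  rw [Finset.mul_sum]
  refine Finset.sum_congr rfl fun p _ => ?_
  rw [Finset.mul_sum]
  refine Finset.sum_congr rfl fun q _ => ?_
  rw [smul_mul_smul_comm]
  congr 1
  push_cast
  ring

lemma stmt8_main_abstract (C : Fin n → R) (α : Fin n → Fin n → ℝ)
    (hrel : ∀ i j, C i * C j + C j * C i = ((-2 : ℂ) * (if i = j then 1 else 0)) • (1:R))
    (hα : ∀ i j, α i j = -α j i)
    (hwedge : ∀ a b p q : Fin n, α a b * α p q - α a p * α b q + α a q * α b p = 0) :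
    (∑ p ∈ Finset.univ.filter (fun p : Fin n × Fin n => p.1 < p.2),
        ((α p.1 p.2 : ℝ) : ℂ) • (C p.1 * C p.2)) *
      (∑ p ∈ Finset.univ.filter (fun p : Fin n × Fin n => p.1 < p.2),
        ((α p.1 p.2 : ℝ) : ℂ) • (C p.1 * C p.2))
      = ((-(∑ p ∈ Finset.univ.filter (fun p : Fin n × Fin n => p.1 < p.2),
          (α p.1 p.2)^2) : ℝ) : ℂ) • (1:R) := by
  have hdiag0 : ∀ i : Fin n, α i i = 0 := by
    intro i; have := hα i i; linarith
  have hCswap : ∀ i j : Fin n, i ≠ j → C j * C i = -(C i * C j) := by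
    intro i j hij
    have h := hrel i j
    rw [if_neg hij, mul_zero, zero_smul] at h
    exact eq_neg_of_add_eq_zero_right h
  set cA := ∑ p ∈ Finset.univ.filter (fun p : Fin n × Fin n => p.1 < p.2),
      ((α p.1 p.2 : ℝ) : ℂ) • (C p.1 * C p.2) with hcA
  set N := ∑ p ∈ Finset.univ.filter (fun p : Fin n × Fin n => p.1 < p.2),
      (α p.1 p.2)^2 with hN
  have hA : (∑ i, ∑ j, ((α i j : ℝ) : ℂ) • (C i * C j)) = cA + cA := by
    refine stmt8_pair_split _ (fun i => ?_) (fun i j hj => ?_)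
    · rw [hdiag0 i]; push_cast; rw [zero_smul]
    · have hne : i ≠ j := (ne_of_gt hj)
      rw [hα j i, hCswap i j hne]
      push_cast
      rw [neg_smul, smul_neg, neg_neg]
  have hNsum : (∑ i, ∑ j, (α i j)^2) = N + N := by
    refine stmt8_pair_split _ (fun i => by rw [hdiag0 i]; ring)
      (fun i j _ => by rw [hα i j]; ring)
  have hTT : (cA + cA) * (cA + cA) = ((-2 * (N + N) : ℝ) : ℂ) • (1:R) := by
    rw [← hA, ← hNsum, stmt8_expand_prod, stmt8_Tval C α hrel hα hwedge]
  have h4 : cA * cA + cA * cA + cA * cA + cA * cA = ((-2 * (N + N) : ℝ) : ℂ) • (1:R) := by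
    rw [← hTT]; noncomm_ring
  have h5 : (4:ℂ) • (cA * cA) = ((-2 * (N + N) : ℝ) : ℂ) • (1:R) := by
    rw [show (4:ℂ) = 1 + 1 + 1 + 1 by norm_num, add_smul, add_smul, add_smul, one_smul]
    rw [← h4]
  have h6 := congrArg (fun x => ((4:ℂ)⁻¹) • x) h5
  simp only [smul_smul] at h6
  rw [show (4:ℂ)⁻¹ * 4 = 1 by norm_num, one_smul] at h6
  rw [h6]
  congr 1
  push_cast
  ring

end Abstract

/-- If a real 2-form `α` satisfies `α ∧ α = 0`, then `c(α)² = -|α|²·id` on a Hermitian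
Clifford module, and consequently `|c(α)φ| = |α|·|φ|`.  Here `|α|² = ∑_{i<j} α_{ij}²`. -/
theorem stmt_8 (n : ℕ) {S : Type*} [NormedAddCommGroup S] [InnerProductSpace ℂ S]
    (c : EuclideanSpace ℝ (Fin n) → (S →ₗ[ℂ] S))
    (hclif : ∀ u v, (c u) ∘ₗ (c v) + (c v) ∘ₗ (c u)
      = (((-2 * (inner ℝ u v : ℝ) : ℝ)) : ℂ) • (LinearMap.id : S →ₗ[ℂ] S))
    (hskew : ∀ v (φ ψ : S), (inner ℂ (c v φ) ψ : ℂ) = -inner ℂ φ (c v ψ))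
    (α : Fin n → Fin n → ℝ) (hα : ∀ i j, α i j = -α j i)
    (hwedge : ∀ a b p q : Fin n, α a b * α p q - α a p * α b q + α a q * α b p = 0) :
    let cα : S →ₗ[ℂ] S :=
      ∑ p ∈ Finset.univ.filter (fun p : Fin n × Fin n => p.1 < p.2),
        ((α p.1 p.2 : ℝ) : ℂ) •
          ((c (EuclideanSpace.single p.1 1)) ∘ₗ (c (EuclideanSpace.single p.2 1)))
    let normsq : ℝ :=
      ∑ p ∈ Finset.univ.filter (fun p : Fin n × Fin n => p.1 < p.2), (α p.1 p.2) ^ 2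
    cα ∘ₗ cα = ((-normsq : ℝ) : ℂ) • (LinearMap.id : S →ₗ[ℂ] S) ∧
      ∀ φ : S, ‖cα φ‖ = Real.sqrt normsq * ‖φ‖ := by
  intro cα normsq
  set C : Fin n → (S →ₗ[ℂ] S) := fun i => c (EuclideanSpace.single i 1) with hC
  have hrel : ∀ i j, C i * C j + C j * C i
      = ((-2:ℂ) * (if i = j then 1 else 0)) • (1 : S →ₗ[ℂ] S) := by
    intro i j
    have h := hclif (EuclideanSpace.single i 1) (EuclideanSpace.single j 1)
    have hi : (inner ℝ (EuclideanSpace.single i (1:ℝ)) (EuclideanSpace.single j (1:ℝ)) : ℝ)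
        = if i = j then 1 else 0 := by
      simp [EuclideanSpace.inner_single_left, EuclideanSpace.single_apply, eq_comm]
    rw [hi] at h
    have hco : (((-2 * (if i = j then 1 else 0) : ℝ)) : ℂ)
        = (-2:ℂ) * (if i = j then 1 else 0) := by
      split_ifs <;> norm_num
    rw [← hco]
    exact h
  have hcαeq : cα = ∑ p ∈ Finset.univ.filter (fun p : Fin n × Fin n => p.1 < p.2),
      ((α p.1 p.2 : ℝ) : ℂ) • (C p.1 * C p.2) := rfl
  have hnseq : normsq = ∑ p ∈ Finset.univ.filter (fun p : Fin n × Fin n => p.1 < p.2),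
      (α p.1 p.2)^2 := rfl
  have hmain : cα * cα = ((-normsq : ℝ) : ℂ) • (1 : S →ₗ[ℂ] S) := by
    rw [hcαeq, hnseq]
    exact stmt8_main_abstract C α hrel hα hwedge
  refine ⟨hmain, ?_⟩
  intro φ
  have happ : ∀ ψ : S, cα ψ
      = ∑ p ∈ Finset.univ.filter (fun p : Fin n × Fin n => p.1 < p.2),
          ((α p.1 p.2 : ℝ) : ℂ) • (C p.1) ((C p.2) ψ) := by
    intro ψ
    rw [hcαeq, LinearMap.sum_apply]
    exact Finset.sum_congr rfl fun p _ => rfl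
  have hskcα : ∀ ψ χ : S, (inner ℂ (cα ψ) χ : ℂ) = - inner ℂ ψ (cα χ) := by
    intro ψ χ
    rw [happ ψ, happ χ, sum_inner]
    have : ∀ p ∈ Finset.univ.filter (fun p : Fin n × Fin n => p.1 < p.2),
        (inner ℂ (((α p.1 p.2 : ℝ) : ℂ) • (C p.1) ((C p.2) ψ)) χ : ℂ)
          = -(inner ℂ ψ (((α p.1 p.2 : ℝ) : ℂ) • (C p.1) ((C p.2) χ)) : ℂ) := by
      intro p hp
      simp only [Finset.mem_filter, Finset.mem_univ, true_and] at hp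
      have hne : p.1 ≠ p.2 := ne_of_lt hp
      have h1 : (C p.2) ((C p.1) χ) = -((C p.1) ((C p.2) χ)) := by
        have h := hrel p.1 p.2
        rw [if_neg hne, mul_zero, zero_smul] at h
        have := congrArg (fun f : S →ₗ[ℂ] S => f χ) h
        simp only [LinearMap.add_apply, Module.End.mul_apply, LinearMap.zero_apply] at this
        exact eq_neg_of_add_eq_zero_right this
      calc (inner ℂ (((α p.1 p.2 : ℝ) : ℂ) • (C p.1) ((C p.2) ψ)) χ : ℂ)
          = ((α p.1 p.2 : ℝ) : ℂ) * inner ℂ ((C p.1) ((C p.2) ψ)) χ := by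
            rw [inner_smul_left, Complex.conj_ofReal]
        _ = ((α p.1 p.2 : ℝ) : ℂ) * -(inner ℂ ((C p.2) ψ) ((C p.1) χ) : ℂ) := by
            rw [hskew (EuclideanSpace.single p.1 1)]
        _ = ((α p.1 p.2 : ℝ) : ℂ) * (inner ℂ ψ ((C p.2) ((C p.1) χ)) : ℂ) := by
            rw [hskew (EuclideanSpace.single p.2 1)]; ring
        _ = ((α p.1 p.2 : ℝ) : ℂ) * (inner ℂ ψ (-((C p.1) ((C p.2) χ))) : ℂ) := by
            rw [h1]
        _ = -(inner ℂ ψ (((α p.1 p.2 : ℝ) : ℂ) • (C p.1) ((C p.2) χ)) : ℂ) := by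
            rw [inner_neg_right, inner_smul_right]; ring
    rw [Finset.sum_congr rfl this, Finset.sum_neg_distrib, ← inner_sum]
  have h2 : (inner ℂ (cα φ) (cα φ) : ℂ) = ((normsq : ℝ) : ℂ) * inner ℂ φ φ := by
    rw [hskcα]
    have hc2 : cα (cα φ) = ((-normsq : ℝ) : ℂ) • φ := by
      have := congrArg (fun f : S →ₗ[ℂ] S => f φ) hmain
      simpa only [Module.End.mul_apply, LinearMap.smul_apply, Module.End.one_apply] using this
    rw [hc2, inner_smul_right]
    push_cast
    ring
  have h3 : ‖cα φ‖^2 = normsq * ‖φ‖^2 := by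
    rw [inner_self_eq_norm_sq_to_K, inner_self_eq_norm_sq_to_K] at h2
    exact Complex.ofReal_injective (by push_cast; exact h2)
  have hnn : 0 ≤ normsq := by
    rw [hnseq]; exact Finset.sum_nonneg fun p _ => sq_nonneg _
  calc ‖cα φ‖ = Real.sqrt (‖cα φ‖^2) := (Real.sqrt_sq (norm_nonneg _)).symm
    _ = Real.sqrt (normsq * ‖φ‖^2) := by rw [h3]
    _ = Real.sqrt normsq * ‖φ‖ := by
        rw [Real.sqrt_mul hnn, Real.sqrt_sq (norm_nonneg _)]
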